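/- Fix an integer k ≥ 1 and let g ∈ ℚ[[x]] be the unique formal power series with constant term 1 satisfying g = 1 + x·g^k; set F = -x·g^{2k-1}. Then: (i) F∘F = x and g·(g∘F) = 1, so for every m with 0 ≤ m ≤ k the pair (g^m, F) is a Riordan involution; (ii) for each such m, letting M_{n,j} ∈ ℚ[y] be the coefficient of xⁿ in (1 + x·y·(1+x)^{k-1})·(1+x)^{-m}·(x·(1+x)^{-k})^j, the unique sequence (μ_n) in ℚ[y] with ∑_{j=0}^{n} M_{n,j}·μ_j = δ_{n,0} for all n satisfies μ_n = ∑_{j=0}^{n} t_{n,j}·y^j, where t_{n,j} ∈ ℚ is the coefficient of xⁿ in g^m·F^j. That is, the coefficient matrix of the moments of the parameterized Riordan array ((1+xy(1+x)^{k-1})/(1+x)^m, x/(1+x)^k) is the Riordan involution (g^m, -x·g^{2k-1}). -/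

import Mathlib

open PowerSeries Finset

/-- Substitution `f ∘ h` of a power series `h` (intended to have zero constant
term) into a power series `f`: the coefficient of `xⁿ` is
`∑_{k=0}^{n} f_k · [xⁿ](hᵏ)`. -/
noncomputable def PowerSeries.comp {R : Type*} [CommSemiring R]
    (f h : PowerSeries R) : PowerSeries R :=
  PowerSeries.mk fun n => ∑ k ∈ Finset.range (n + 1),
    (PowerSeries.coeff (R := R) k f) * (PowerSeries.coeff (R := R) n (h ^ k))

namespace PowerSeries

variable {S : Type*} [CommRing S]

lemma coeff_comp (f h : S⟦X⟧) (n : ℕ) :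
    coeff n (f.comp h) = ∑ j ∈ Finset.range (n + 1),
      coeff j f * coeff n (h ^ j) :=
  coeff_mk _ _

lemma coeff_zero_of_X_pow_dvd {w : S⟦X⟧} {i n : ℕ} (hd : X ^ i ∣ w) (hn : n < i) :
    coeff n w = 0 := (X_pow_dvd_iff.mp hd) n hn

lemma X_pow_dvd_pow {h : S⟦X⟧} (h0 : constantCoeff h = 0) (j : ℕ) :
    (X : S⟦X⟧) ^ j ∣ h ^ j :=
  pow_dvd_pow_of_dvd (X_dvd_iff.mpr h0) j

lemma coeff_pow_eq_zero {h : S⟦X⟧} (h0 : constantCoeff h = 0) {j n : ℕ} (hn : n < j) :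
    coeff n (h ^ j) = 0 :=
  coeff_zero_of_X_pow_dvd (X_pow_dvd_pow h0 j) hn

lemma comp_one (h : S⟦X⟧) : (1 : S⟦X⟧).comp h = 1 := by
  ext n
  rw [coeff_comp, Finset.sum_eq_single 0]
  · simp
  · intro j hj hj0; simp [coeff_one, hj0]
  · simp

lemma comp_C (a : S) (h : S⟦X⟧) : (C a).comp h = C a := by
  ext n
  rw [coeff_comp, Finset.sum_eq_single 0]
  · simp [coeff_C]
  · intro j hj hj0; simp [coeff_C, hj0]
  · simp

lemma comp_X {h : S⟦X⟧} (h0 : constantCoeff h = 0) : (X : S⟦X⟧).comp h = h := by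
  ext n
  rw [coeff_comp]
  rcases Nat.eq_zero_or_pos n with hn | hn
  · subst hn
    simp [coeff_X, coeff_zero_eq_constantCoeff_apply, h0]
  · rw [Finset.sum_eq_single 1]
    · simp
    · intro j hj hj1; simp [coeff_X, hj1]
    · intro h1; exact absurd (Finset.mem_range.mpr (by omega)) h1

lemma comp_add (f g h : S⟦X⟧) : (f + g).comp h = f.comp h + g.comp h := by
  ext n
  simp [coeff_comp, add_mul, Finset.sum_add_distrib]

lemma comp_neg (f h : S⟦X⟧) : (-f).comp h = -(f.comp h) := by
  ext n
  simp [coeff_comp, Finset.sum_neg_distrib]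

lemma coeff_comp_eval {h : S⟦X⟧} (h0 : constantCoeff h = 0) (f : S⟦X⟧)
    {n N : ℕ} (hn : n < N) :
    coeff n (f.comp h) =
      coeff n (Polynomial.eval₂ (C (R := S)) h (trunc N f)) := by
  obtain ⟨N', rfl⟩ : ∃ N', N = N' + 1 := ⟨N - 1, by omega⟩
  rw [Polynomial.eval₂_eq_sum_range' (C (R := S)) (natDegree_trunc_lt f N') h]
  rw [map_sum, coeff_comp]
  rw [Finset.sum_subset (Finset.range_subset_range.mpr (by omega : n + 1 ≤ N' + 1))]
  · apply Finset.sum_congr rfl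
    intro j hj
    rw [coeff_trunc, if_pos (Finset.mem_range.mp hj), coeff_C_mul]
  · intro j hj hj'
    rw [coeff_pow_eq_zero h0 (by simp at hj'; omega), mul_zero]

lemma comp_mul {h : S⟦X⟧} (h0 : constantCoeff h = 0) (f g : S⟦X⟧) :
    (f * g).comp h = f.comp h * g.comp h := by
  ext n
  set tf := trunc (n + 1) f
  set tg := trunc (n + 1) g
  have hd : (Polynomial.X : Polynomial S) ^ (n + 1) ∣ trunc (n + 1) (f * g) - tf * tg := by
    rw [Polynomial.X_pow_dvd_iff]
    intro d hd
    rw [Polynomial.coeff_sub, coeff_trunc, if_pos hd, Polynomial.coeff_mul, coeff_mul,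
      sub_eq_zero]
    apply Finset.sum_congr rfl
    intro p hp
    have h1 : p.1 < n + 1 := by
      have := Finset.HasAntidiagonal.antidiagonal.fst_le hp; omega
    have h2 : p.2 < n + 1 := by
      have := Finset.HasAntidiagonal.antidiagonal.snd_le hp; omega
    rw [coeff_trunc, if_pos h1, coeff_trunc, if_pos h2]
  obtain ⟨Q, hQ⟩ := hd
  have htr : trunc (n + 1) (f * g) = tf * tg + Polynomial.X ^ (n + 1) * Q := by
    rw [← hQ]; ring
  rw [coeff_comp_eval h0 (f * g) (Nat.lt_succ_self n), htr, Polynomial.eval₂_add,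
    Polynomial.eval₂_mul, Polynomial.eval₂_mul, Polynomial.eval₂_pow,
    Polynomial.eval₂_X, map_add]
  have hz : coeff n (h ^ (n + 1) * Polynomial.eval₂ (C (R := S)) h Q) = 0 := by
    apply coeff_zero_of_X_pow_dvd (Dvd.dvd.mul_right (X_pow_dvd_pow h0 (n + 1)) _)
      (Nat.lt_succ_self n)
  rw [hz, add_zero, coeff_mul, coeff_mul]
  apply Finset.sum_congr rfl
  intro p hp
  have h1 : p.1 < n + 1 := by have := Finset.HasAntidiagonal.antidiagonal.fst_le hp; omega
  have h2 : p.2 < n + 1 := by have := Finset.HasAntidiagonal.antidiagonal.snd_le hp; omega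
  rw [coeff_comp_eval h0 f h1, coeff_comp_eval h0 g h2]

lemma comp_pow {h : S⟦X⟧} (h0 : constantCoeff h = 0) (f : S⟦X⟧) (j : ℕ) :
    (f ^ j).comp h = (f.comp h) ^ j := by
  induction j with
  | zero => simpa using comp_one h
  | succ j ih => rw [pow_succ, comp_mul h0, ih, pow_succ]

/-- Uniqueness of solutions of `G = 1 + h·Gᵏ`. -/
lemma funcEq_unique (k : ℕ) {h G1 G2 : S⟦X⟧} (h0 : constantCoeff h = 0)
    (h1 : G1 = 1 + h * G1 ^ k) (h2 : G2 = 1 + h * G2 ^ k) : G1 = G2 := by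
  obtain ⟨s, hs⟩ := sub_dvd_pow_sub_pow G1 G2 k
  have hD : G1 - G2 = ((G1 - G2) * s) * h := by
    conv_lhs => rw [h1, h2]
    rw [show (1 + h * G1 ^ k) - (1 + h * G2 ^ k) = h * (G1 ^ k - G2 ^ k) by ring, hs]
    ring
  have hdvd : ∀ n : ℕ, (X : S⟦X⟧) ^ n ∣ G1 - G2 := by
    intro n
    induction n with
    | zero => simp
    | succ n ih =>
      rw [hD, pow_succ]
      exact mul_dvd_mul (ih.mul_right s) (X_dvd_iff.mpr h0)
  have hz : G1 - G2 = 0 := by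
    ext n
    rw [map_zero]
    exact coeff_zero_of_X_pow_dvd (hdvd (n + 1)) (Nat.lt_succ_self n)
  exact sub_eq_zero.mp hz

/-- Moment summation lemma. -/
lemma sum_coeff_mul_comp {h : S⟦X⟧} (h0 : constantCoeff h = 0) (d Φ : S⟦X⟧) (n : ℕ) :
    ∑ j ∈ Finset.range (n + 1), coeff n (d * h ^ j) * coeff j Φ
      = coeff n (d * Φ.comp h) := by
  rw [coeff_mul]
  have step : ∀ p ∈ antidiagonal n,
      coeff p.1 d * coeff p.2 (Φ.comp h)
        = ∑ j ∈ Finset.range (n + 1), coeff p.1 d * (coeff j Φ * coeff p.2 (h ^ j)) := by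
    intro p hp
    rw [coeff_comp, Finset.mul_sum]
    rw [Finset.sum_subset (Finset.range_subset_range.mpr
      (by have := Finset.HasAntidiagonal.antidiagonal.snd_le hp; omega : p.2 + 1 ≤ n + 1))]
    intro j hj hj'
    rw [coeff_pow_eq_zero h0 (by simp at hj'; omega), mul_zero, mul_zero]
  rw [Finset.sum_congr rfl step, Finset.sum_comm]
  apply Finset.sum_congr rfl
  intro j hj
  rw [coeff_mul, Finset.sum_mul]
  apply Finset.sum_congr rfl
  intro p hp
  ring

lemma comp_sub (f g h : S⟦X⟧) :
    (f - g).comp h = f.comp h - g.comp h := by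
  rw [sub_eq_add_neg, comp_add, comp_neg, sub_eq_add_neg]

end PowerSeries

/-- Let `g = 1 + x·gᵏ` and `F = -x·g^{2k-1}`. Then `(gᵐ, F)` is a Riordan
involution for `0 ≤ m ≤ k`, and the coefficient matrix of the moments of the
parameterized Riordan array `((1+xy(1+x)^{k-1})/(1+x)ᵐ, x/(1+x)ᵏ)` is the
Riordan involution `(gᵐ, -x·g^{2k-1})`. -/
theorem stmt18 (k : ℕ) (hk : 1 ≤ k) (g : PowerSeries ℚ)
    (hg0 : PowerSeries.constantCoeff (R := ℚ) g = 1)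
    (hg : g = 1 + PowerSeries.X * g ^ k)
    (F : PowerSeries ℚ) (hF : F = -(PowerSeries.X * g ^ (2 * k - 1))) :
    (PowerSeries.comp F F = PowerSeries.X ∧ g * PowerSeries.comp g F = 1 ∧
      ∀ m : ℕ, m ≤ k → g ^ m * PowerSeries.comp (g ^ m) F = 1) ∧
    (∀ m : ℕ, m ≤ k →
      ∀ v : PowerSeries (Polynomial ℚ), (1 + PowerSeries.X) * v = 1 →
      ∀ M : ℕ → ℕ → Polynomial ℚ,
        (∀ n j : ℕ, M n j =
          PowerSeries.coeff (R := Polynomial ℚ) n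
            ((1 + PowerSeries.X * PowerSeries.C (R := Polynomial ℚ) Polynomial.X *
                (1 + PowerSeries.X) ^ (k - 1)) * v ^ m *
              (PowerSeries.X * v ^ k) ^ j)) →
      ∀ μ : ℕ → Polynomial ℚ,
        (∀ n : ℕ, ∑ j ∈ Finset.range (n + 1), M n j * μ j = if n = 0 then 1 else 0) →
      ∀ n : ℕ, μ n = ∑ j ∈ Finset.range (n + 1),
        Polynomial.C (PowerSeries.coeff (R := ℚ) n (g ^ m * F ^ j)) * Polynomial.X ^ j) := by
  constructor
  · have hF0 : constantCoeff F = 0 := by simp [hF]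
    set G2 : PowerSeries ℚ := 1 - X * g ^ (k - 1) with hG2
    have hgk : g * g ^ (k - 1) = g ^ k := by
      rw [← pow_succ']
      congr 1
      omega
    have hgG2 : g * G2 = 1 := by
      have : g - X * g ^ k = 1 := by nth_rewrite 1 [hg]; ring
      calc g * G2 = g - X * (g * g ^ (k - 1)) := by rw [hG2]; ring
      _ = 1 := by rw [hgk, this]
    have h2k : 2 * k - 1 = (k - 1) + k := by omega
    have hG2eq : G2 = 1 + F * G2 ^ k := by
      rw [hF, h2k, pow_add]
      have : (g ^ k * G2 ^ k) = 1 := by rw [← mul_pow, hgG2, one_pow]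
      calc G2 = 1 + -(X * g ^ (k-1) * (g ^ k * G2 ^ k)) := by rw [this, hG2]; ring
      _ = 1 + -(X * (g ^ (k-1) * g ^ k)) * G2 ^ k := by ring
    have hcomp_geq : g.comp F = 1 + F * (g.comp F) ^ k := by
      conv_lhs => rw [hg]
      rw [comp_add, comp_one, comp_mul hF0, comp_X hF0, comp_pow hF0]
    have hgF : g.comp F = G2 := funcEq_unique k hF0 hcomp_geq hG2eq
    have hggF : g * g.comp F = 1 := by rw [hgF]; exact hgG2
    refine ⟨?_, hggF, ?_⟩
    · nth_rewrite 1 [hF]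
      rw [comp_neg, comp_mul hF0, comp_X hF0, comp_pow hF0, hgF, hF]
      have h1 : g ^ (2*k-1) * G2 ^ (2*k-1) = 1 := by rw [← mul_pow, hgG2, one_pow]
      calc -(-(X * g ^ (2*k-1)) * G2 ^ (2*k-1)) = X * (g ^ (2*k-1) * G2 ^ (2*k-1)) := by ring
      _ = X := by rw [h1, mul_one]
    · intro m hm
      rw [comp_pow hF0, hgF, ← mul_pow, hgG2, one_pow]
  · intro m hm v hv M hM μ hμ
    set A : PowerSeries (Polynomial ℚ) :=
      1 + X * PowerSeries.C Polynomial.X * (1 + X) ^ (k - 1) with hA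
    set R : PowerSeries (Polynomial ℚ) := X * v ^ k with hR
    have hR0 : constantCoeff R = 0 := by simp [hR]
    set Gb : PowerSeries (Polynomial ℚ) := PowerSeries.map Polynomial.C g with hGbdef
    set Fb : PowerSeries (Polynomial ℚ) := PowerSeries.map Polynomial.C F with hFbdef
    have hGbeq : Gb = 1 + X * Gb ^ k := by
      rw [hGbdef]
      conv_lhs => rw [hg]
      rw [map_add, map_one, map_mul, map_pow, PowerSeries.map_X]
    have hFbeq : Fb = -(X * Gb ^ (2 * k - 1)) := by
      rw [hFbdef, hF, map_neg, map_mul, map_pow, PowerSeries.map_X, hGbdef]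
    have hFb0 : constantCoeff Fb = 0 := by simp [hFbeq]
    set E : PowerSeries (Polynomial ℚ) := PowerSeries.C Polynomial.X * Fb
      with hE
    have hE0 : constantCoeff E = 0 := by simp [hE, hFb0]
    set U : PowerSeries (Polynomial ℚ) := invOfUnit (1 - E) 1 with hUdef
    have hU : (1 - E) * U = 1 := by
      apply mul_invOfUnit
      simp [hE0]
    set Φ : PowerSeries (Polynomial ℚ) := Gb ^ m * U with hΦ
    -- coefficients of Φ
    have coeffGmE : ∀ j i : ℕ, coeff j (Gb ^ m * E ^ i)
        = Polynomial.C (coeff j (g ^ m * F ^ i)) * Polynomial.X ^ i := by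
      intro j i
      have h1 : Gb ^ m * E ^ i
          = PowerSeries.C (Polynomial.X ^ i)
              * PowerSeries.map Polynomial.C (g ^ m * F ^ i) := by
        rw [hE, hGbdef, hFbdef, map_mul, map_pow, map_pow, mul_pow, map_pow]
        ring
      rw [h1, coeff_C_mul, coeff_map, mul_comm]
    have coeffΦ : ∀ j : ℕ, coeff j Φ
        = ∑ i ∈ Finset.range (j + 1),
            Polynomial.C (coeff j (g ^ m * F ^ i)) * Polynomial.X ^ i := by
      intro j
      have h1 : (∑ i ∈ Finset.range (j + 1), E ^ i) * (1 - E) = 1 - E ^ (j + 1) := by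
        have := geom_sum_mul E (j + 1)
        linear_combination -this
      have geo : (∑ i ∈ Finset.range (j + 1), E ^ i) = (1 - E ^ (j + 1)) * U := by
        calc (∑ i ∈ Finset.range (j + 1), E ^ i)
            = (∑ i ∈ Finset.range (j + 1), E ^ i) * ((1 - E) * U) := by rw [hU, mul_one]
          _ = ((∑ i ∈ Finset.range (j + 1), E ^ i) * (1 - E)) * U := by ring
          _ = (1 - E ^ (j + 1)) * U := by rw [h1]
      have key : Φ = Gb ^ m * (∑ i ∈ Finset.range (j + 1), E ^ i)
          + Gb ^ m * (E ^ (j + 1) * U) := by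
        rw [geo, hΦ]; ring
      have hzero : coeff j (Gb ^ m * (E ^ (j + 1) * U)) = 0 := by
        apply coeff_zero_of_X_pow_dvd _ (Nat.lt_succ_self j)
        exact Dvd.dvd.mul_left ((X_pow_dvd_pow hE0 (j + 1)).mul_right U) (Gb ^ m)
      rw [key, map_add, hzero, add_zero, Finset.mul_sum, map_sum]
      exact Finset.sum_congr rfl fun i _ => coeffGmE j i
    -- composition computations
    have hGR : Gb.comp R = 1 + X := by
      apply funcEq_unique k hR0
      · conv_lhs => rw [hGbeq]
        rw [comp_add, comp_one, comp_mul hR0, comp_X hR0, comp_pow hR0]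
      · have h2 : R * (1 + X) ^ k = X := by
          calc R * (1 + X) ^ k = X * ((1 + X) * v) ^ k := by rw [hR, mul_pow]; ring
            _ = X := by rw [hv, one_pow, mul_one]
        rw [h2]
    have hFR : Fb.comp R = -(X * (1 + X) ^ (k - 1)) := by
      rw [hFbeq, comp_neg, comp_mul hR0, comp_X hR0, comp_pow hR0, hGR]
      have h2k : 2 * k - 1 = k + (k - 1) := by omega
      rw [h2k, pow_add]
      calc -(R * ((1 + X) ^ k * (1 + X) ^ (k - 1)))
          = -(X * (((1 + X) * v) ^ k * (1 + X) ^ (k - 1))) := by rw [hR, mul_pow]; ring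
        _ = -(X * (1 + X) ^ (k - 1)) := by rw [hv, one_pow, one_mul]
    have hAcomp : (1 - E).comp R = A := by
      rw [comp_sub, comp_one, hE, comp_mul hR0, comp_C, hFR, hA]
      ring
    have hAU : A * U.comp R = 1 := by
      have h3 := congrArg (fun w : PowerSeries (Polynomial ℚ) => w.comp R) hU
      simp only [comp_mul hR0, comp_one, hAcomp] at h3
      exact h3
    have key : (A * v ^ m) * Φ.comp R = 1 := by
      rw [hΦ, comp_mul hR0, comp_pow hR0, hGR]
      calc A * v ^ m * ((1 + X) ^ m * U.comp R)
          = (A * U.comp R) * ((1 + X) * v) ^ m := by rw [mul_pow]; ring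
        _ = 1 := by rw [hAU, hv, one_pow, mul_one]
    -- moment recurrence for coeff Φ
    have hμ' : ∀ n : ℕ, ∑ j ∈ Finset.range (n + 1), M n j * coeff j Φ
        = if n = 0 then 1 else 0 := by
      intro n
      have h4 := sum_coeff_mul_comp hR0 (A * v ^ m) Φ n
      calc ∑ j ∈ Finset.range (n + 1), M n j * coeff j Φ
          = ∑ j ∈ Finset.range (n + 1),
              coeff n ((A * v ^ m) * R ^ j) * coeff j Φ := by
            apply Finset.sum_congr rfl
            intro j _
            rw [hM n j, mul_assoc]
        _ = coeff n ((A * v ^ m) * Φ.comp R) := h4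
        _ = if n = 0 then 1 else 0 := by rw [key, coeff_one]
    -- diagonal entries
    have hccv : constantCoeff v = 1 := by
      have h5 := congrArg (constantCoeff (R := Polynomial ℚ)) hv
      simpa using h5
    have hMnn : ∀ n : ℕ, M n n = 1 := by
      intro n
      rw [hM n n]
      have h6 : A * v ^ m * (X * v ^ k) ^ n = X ^ n * (A * (v ^ m * (v ^ k) ^ n)) := by
        rw [mul_pow]; ring
      rw [h6]
      have h7 := coeff_X_pow_mul (A * (v ^ m * (v ^ k) ^ n)) n 0
      rw [zero_add] at h7
      rw [h7, coeff_zero_eq_constantCoeff_apply]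
      simp [hA, hccv]
    -- conclude by strong induction
    intro n
    induction n using Nat.strong_induction_on with
    | _ n ih =>
      have h1 := hμ n
      have h2 := hμ' n
      rw [Finset.sum_range_succ] at h1 h2
      have heq : ∑ j ∈ Finset.range n, M n j * μ j
          = ∑ j ∈ Finset.range n, M n j * coeff j Φ := by
        apply Finset.sum_congr rfl
        intro j hj
        rw [ih j (Finset.mem_range.mp hj), ← coeffΦ j]
      rw [heq] at h1
      have h3 : M n n * μ n = M n n * coeff n Φ :=
        add_left_cancel (h1.trans h2.symm)
      rw [hMnn n, one_mul, one_mul] at h3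
      rw [h3, coeffΦ n]
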